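/- Let G : (0,∞) → ℝ be Borel measurable and bounded in modulus after composing with t ↦ e^{itG}; suppose for every x > 0, ∫₀¹ e^{itG(xy)} dy = ∫₀¹ e^{itG(y)} dy for all t ∈ ℝ. Then for each t ∈ ℝ, e^{itG(u)} equals the constant w(t) = ∫₀¹ e^{itG(y)} dy for Lebesgue-almost every u ∈ (0,∞). -/

import Mathlib

open MeasureTheory Set Complex

theorem stmt_12 (G : ℝ → ℝ) (hG : Measurable G)
    (h : ∀ x : ℝ, 0 < x → ∀ t : ℝ,
      ∫ y in Ioc (0 : ℝ) 1, Complex.exp (Complex.I * t * G (x * y)) =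
        ∫ y in Ioc (0 : ℝ) 1, Complex.exp (Complex.I * t * G y)) :
    ∀ t : ℝ, ∀ᵐ u : ℝ ∂volume, u ∈ Ioi (0 : ℝ) →
      Complex.exp (Complex.I * t * G u) =
        ∫ y in Ioc (0 : ℝ) 1, Complex.exp (Complex.I * t * G y) := by
  intro t
  obtain ⟨g, hg_def⟩ : ∃ g : ℝ → ℂ, g = fun u => Complex.exp (Complex.I * t * G u) := ⟨_, rfl⟩
  obtain ⟨w, hw_def⟩ : ∃ w : ℂ, w = ∫ y in Ioc (0 : ℝ) 1, g y := ⟨_, rfl⟩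
  have hgm : Measurable g := by
    rw [hg_def]
    exact Complex.measurable_exp.comp (measurable_const.mul (Complex.measurable_ofReal.comp hG))
  have hgb : ∀ u, ‖g u‖ ≤ 1 := by
    intro u
    rw [hg_def]
    rw [Complex.norm_exp]
    simp [Complex.mul_re]
  have hint : ∀ s : Set ℝ, volume s < ⊤ → IntegrableOn g s := by
    intro s hs
    exact Integrable.mono' (integrableOn_const hs.ne)
      hgm.aestronglyMeasurable.restrict (ae_of_all _ hgb)
  have hgloc : LocallyIntegrable g volume := by
    rw [locallyIntegrable_iff]
    exact fun k hk => hint k hk.measure_lt_top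
  -- substitution
  have subst : ∀ x : ℝ, 0 < x →
      ∫ y in Ioc (0 : ℝ) 1, g (x * y) = x⁻¹ • ∫ u in Ioc (0 : ℝ) x, g u := by
    intro x hx
    rw [← integral_indicator measurableSet_Ioc, ← integral_indicator measurableSet_Ioc,
      ← abs_of_pos (inv_pos.mpr hx), ← Measure.integral_comp_mul_left]
    congr 1
    ext1 y
    rw [← indicator_comp_right, preimage_const_mul_Ioc₀ _ _ hx, zero_div, div_self hx.ne']
    rfl
  have hF : ∀ x : ℝ, 0 < x → ∫ u in Ioc (0 : ℝ) x, g u = x • w := by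
    intro x hx
    have h' : ∫ y in Ioc (0 : ℝ) 1, g (x * y) = w := by
      rw [hg_def, hw_def, hg_def]
      simpa using h x hx t
    rw [subst x hx] at h'
    rw [← h', smul_smul, mul_inv_cancel₀ hx.ne', one_smul]
  have hIoc : ∀ a b : ℝ, 0 < a → a ≤ b → ∫ u in Ioc a b, g u = (b - a) • w := by
    intro a b ha hab
    have hb : 0 < b := lt_of_lt_of_le ha hab
    have i1 : IntervalIntegrable g volume 0 a :=
      intervalIntegrable_iff.mpr (hint _ (by
        rw [Set.uIoc_eq_union]
        exact lt_of_le_of_lt (measure_union_le _ _) (by simp [Real.volume_Ioc])))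
    have i2 : IntervalIntegrable g volume a b :=
      intervalIntegrable_iff.mpr (hint _ (by
        rw [Set.uIoc_eq_union]
        exact lt_of_le_of_lt (measure_union_le _ _) (by simp [Real.volume_Ioc])))
    have hadd := intervalIntegral.integral_add_adjacent_intervals i1 i2
    rw [intervalIntegral.integral_of_le ha.le, intervalIntegral.integral_of_le hab,
      intervalIntegral.integral_of_le hb.le, hF a ha, hF b hb] at hadd
    have : ∫ u in Ioc a b, g u = b • w - a • w := by linear_combination hadd
    rw [this, ← sub_smul]
  -- average over small balls is w
  have havg : ∀ x : ℝ, 0 < x → ∀ δ : ℝ, 0 < δ → δ < x →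
      ⨍ y in Metric.closedBall x δ, g y = w := by
    intro x hx δ hδ hδx
    rw [Real.closedBall_eq_Icc, setAverage_eq, integral_Icc_eq_integral_Ioc,
      hIoc _ _ (by linarith) (by linarith), measureReal_def, Real.volume_Icc]
    have h2 : x + δ - (x - δ) = 2 * δ := by ring
    rw [h2, ENNReal.toReal_ofReal (by linarith), smul_smul,
      inv_mul_cancel₀ (by positivity), one_smul]
  have main := IsUnifLocDoublingMeasure.ae_tendsto_average (μ := volume) hgloc 1
  filter_upwards [main] with x hx hx0
  have hx0' : (0:ℝ) < x := hx0
  have hten : Filter.Tendsto (fun δ : ℝ => ⨍ y in Metric.closedBall x δ, g y)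
      (nhdsWithin 0 (Ioi 0)) (nhds (g x)) := by
    refine hx (fun _ => x) id Filter.tendsto_id ?_
    filter_upwards [self_mem_nhdsWithin] with δ hδ
    simp only [Metric.mem_closedBall, dist_self, one_mul]
    exact le_of_lt hδ
  have hten' : Filter.Tendsto (fun δ : ℝ => ⨍ y in Metric.closedBall x δ, g y)
      (nhdsWithin 0 (Ioi 0)) (nhds w) := by
    have : (fun δ : ℝ => ⨍ y in Metric.closedBall x δ, g y) =ᶠ[nhdsWithin 0 (Ioi 0)]
        (fun _ => w) := by
      filter_upwards [Ioo_mem_nhdsGT hx0'] with δ hδ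
      exact havg x hx0' δ hδ.1 hδ.2
    exact Filter.Tendsto.congr' this.symm tendsto_const_nhds
  have : g x = w := tendsto_nhds_unique hten hten'
  rw [hg_def, hw_def, hg_def] at this
  simpa using this
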